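/- arXiv:2401.04596 — 2 statements merged into one kernel-verified Lean document; each statement's English description precedes it below -/
import Mathlib

section
/- For every maximally entangled state η̂⋆ of the disc theory (i.e. η̂⋆ ∈ GL(Ω_∞)), there exist angles α⋆, β⋆, γ⋆, δ⋆ ∈ [0, 2π) such that for every state η̂ of Ω_∞ ⊗_max Ω_∞ and all binary observables A₀, A₁, B₀, B₁ on Ω_∞ one has |C[η̂; A₀,A₁; B₀,B₁]| ≤ |C[η̂⋆; E_∞(α⋆),E_∞(β⋆); E_∞(γ⋆),E_∞(δ⋆)]|. -/
noncomputable section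

/-- Standard inner product on `ℝ³`. -/
def dot3 (v w : Fin 3 → ℝ) : ℝ := ∑ i, v i * w i

/-- The disc state space `Ω_∞ = {(x,y,1) : x² + y² ≤ 1}`. -/
def OmegaD : Set (Fin 3 → ℝ) := {v | v 0 ^ 2 + v 1 ^ 2 ≤ 1 ∧ v 2 = 1}

/-- The unit effect `u = (0,0,1)`. -/
def uEff : Fin 3 → ℝ := ![0, 0, 1]

/-- The pure effects `e_∞(θ) = ½(cos θ, sin θ, 1)`. -/
def eD (t : ℝ) : Fin 3 → ℝ := ![Real.cos t / 2, Real.sin t / 2, 1 / 2]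

/-- The effect space `E_∞`. -/
def EffD : Set (Fin 3 → ℝ) := {f | ∀ ω ∈ OmegaD, dot3 f ω ∈ Set.Icc (0 : ℝ) 1}

/-- The positive cone `V_{∞+}`. -/
def VposD : Set (Fin 3 → ℝ) := {x | ∃ c : ℝ, 0 ≤ c ∧ ∃ ω ∈ OmegaD, x = c • ω}

/-- The dual cone `V*_{∞+}`. -/
def VdualD : Set (Fin 3 → ℝ) := {x | ∃ c : ℝ, 0 ≤ c ∧ ∃ f ∈ EffD, x = c • f}

/-- A state of `Ω_∞ ⊗_max Ω_∞`: a normalized, cone-preserving linear map. -/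
def IsStateD (η : (Fin 3 → ℝ) →ₗ[ℝ] (Fin 3 → ℝ)) : Prop :=
  (∀ x ∈ VdualD, η x ∈ VposD) ∧ dot3 uEff (η uEff) = 1

/-- A binary observable on `Ω_∞`. -/
def IsObservableD (A : (Fin 3 → ℝ) × (Fin 3 → ℝ)) : Prop :=
  A.1 ∈ EffD ∧ A.2 ∈ EffD ∧ A.1 + A.2 = uEff

/-- The observable `E_∞(θ) = (e_∞(θ), u - e_∞(θ))`. -/
def EObsD (t : ℝ) : (Fin 3 → ℝ) × (Fin 3 → ℝ) := (eD t, uEff - eD t)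

/-- The correlator `E(st)`. -/
def corr (η : (Fin 3 → ℝ) →ₗ[ℝ] (Fin 3 → ℝ)) (A B : (Fin 3 → ℝ) × (Fin 3 → ℝ)) : ℝ :=
  dot3 B.1 (η A.1) - dot3 B.2 (η A.1) - dot3 B.1 (η A.2) + dot3 B.2 (η A.2)

/-- The CHSH value. -/
def CHSH (η : (Fin 3 → ℝ) →ₗ[ℝ] (Fin 3 → ℝ))
    (A0 A1 B0 B1 : (Fin 3 → ℝ) × (Fin 3 → ℝ)) : ℝ :=
  corr η A0 B0 + corr η A0 B1 + corr η A1 B0 - corr η A1 B1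

/-- `GL(Ω_∞)`: linear bijections preserving the disc state space.  Its elements are
exactly the maximally entangled states of `Ω_∞ ⊗_max Ω_∞`. -/
def GLOmegaD : Set ((Fin 3 → ℝ) →ₗ[ℝ] (Fin 3 → ℝ)) :=
  {T | Function.Bijective T ∧ T '' OmegaD = OmegaD}

lemma sqrt_le_of_sq_le' {a b : ℝ} (h : a ≤ b^2) (hb : 0 ≤ b) : Real.sqrt a ≤ b := by
  calc Real.sqrt a ≤ Real.sqrt (b^2) := Real.sqrt_le_sqrt h
  _ = b := Real.sqrt_sq hb

lemma cs2 (x0 x1 y0 y1 : ℝ) :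
    x0*y0 + x1*y1 ≤ Real.sqrt (x0^2+x1^2) * Real.sqrt (y0^2+y1^2) := by
  have h1 : x0*y0 + x1*y1 ≤ Real.sqrt ((x0*y0+x1*y1)^2) := by
    rw [Real.sqrt_sq_eq_abs]; exact le_abs_self _
  have h2 : Real.sqrt ((x0*y0+x1*y1)^2) ≤ Real.sqrt ((x0^2+x1^2)*(y0^2+y1^2)) := by
    apply Real.sqrt_le_sqrt; nlinarith [sq_nonneg (x0*y1 - x1*y0)]
  rw [Real.sqrt_mul (by positivity)] at h2
  linarith

lemma tri2 (x0 x1 y0 y1 : ℝ) :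
    Real.sqrt ((x0+y0)^2+(x1+y1)^2) ≤ Real.sqrt (x0^2+x1^2) + Real.sqrt (y0^2+y1^2) := by
  apply sqrt_le_of_sq_le' _ (by positivity)
  have hx : Real.sqrt (x0^2+x1^2) ^ 2 = x0^2+x1^2 := Real.sq_sqrt (by positivity)
  have hy : Real.sqrt (y0^2+y1^2) ^ 2 = y0^2+y1^2 := Real.sq_sqrt (by positivity)
  have := cs2 x0 x1 y0 y1
  nlinarith

lemma dual_pair (b0 b1 b2 z0 z1 z2 : ℝ)
    (hbm : b0^2+b1^2 ≤ (1-b2)^2) (hbp : b0^2+b1^2 ≤ (1+b2)^2)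
    (hb2a : -1 ≤ b2) (hb2b : b2 ≤ 1) :
    |b0*z0 + b1*z1 + b2*z2| ≤ max (Real.sqrt (z0^2+z1^2)) |z2| := by
  set N := Real.sqrt (z0^2+z1^2) with hN
  have hN0 : 0 ≤ N := Real.sqrt_nonneg _
  have hnb : Real.sqrt (b0^2+b1^2) ≤ 1 - |b2| := by
    apply sqrt_le_of_sq_le' _ (by rcases abs_cases b2 with ⟨h,_⟩|⟨h,_⟩ <;> rw [h] <;> linarith)
    rcases abs_cases b2 with ⟨h,_⟩|⟨h,_⟩ <;> rw [h]
    · nlinarith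
    · nlinarith
  have h1 : |b0*z0 + b1*z1| ≤ (1 - |b2|) * N := by
    have := cs2 b0 b1 z0 z1
    have := cs2 (-b0) (-b1) z0 z1
    have hsb : Real.sqrt ((-b0)^2+(-b1)^2) = Real.sqrt (b0^2+b1^2) := by ring_nf
    rw [abs_le]
    constructor
    · nlinarith [Real.sqrt_nonneg (b0^2+b1^2), mul_le_mul_of_nonneg_right hnb hN0]
    · nlinarith [Real.sqrt_nonneg (b0^2+b1^2), mul_le_mul_of_nonneg_right hnb hN0]
  have h2 : |b2*z2| ≤ |b2| * |z2| := by rw [abs_mul]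
  have hM : N ≤ max N |z2| := le_max_left _ _
  have hM2 : |z2| ≤ max N |z2| := le_max_right _ _
  have hb2 : |b2| ≤ 1 := abs_le.mpr ⟨hb2a, hb2b⟩
  have hb2n : 0 ≤ |b2| := abs_nonneg _
  calc |b0*z0 + b1*z1 + b2*z2| ≤ |b0*z0+b1*z1| + |b2*z2| := abs_add_le _ _
    _ ≤ (1-|b2|) * N + |b2| * |z2| := by linarith
    _ ≤ (1-|b2|) * max N |z2| + |b2| * max N |z2| := by
        have := mul_le_mul_of_nonneg_left hM (by linarith : (0:ℝ) ≤ 1 - |b2|)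
        have := mul_le_mul_of_nonneg_left hM2 hb2n
        linarith
    _ = max N |z2| := by ring

lemma two_sq_sum (Pp Pm : ℝ) (hPp0 : 0 ≤ Pp) (hPm0 : 0 ≤ Pm) (h : Pp^2 + Pm^2 ≤ 4) :
    Pp + Pm ≤ 2 * Real.sqrt 2 := by
  have h22 : ((2:ℝ)*Real.sqrt 2)^2 = 8 := by
    rw [mul_pow, Real.sq_sqrt (show (0:ℝ) ≤ 2 by norm_num)]; norm_num
  have hsq : (Pp + Pm)^2 ≤ 8 := by nlinarith [sq_nonneg (Pp - Pm)]
  have := sqrt_le_of_sq_le' (hsq.trans_eq h22.symm) (by positivity)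
  rwa [Real.sqrt_sq (by linarith)] at this

lemma one_le_sqrt2 : 1 ≤ Real.sqrt 2 := by
  nlinarith [Real.sq_sqrt (show (0:ℝ) ≤ 2 by norm_num), Real.sqrt_nonneg 2]

lemma core (m0 m1 c0 c1 c2 d0 d1 d2 b0 b1 b2 e0 e1 e2 : ℝ)
    (hcp : (m0+c0)^2+(m1+c1)^2 ≤ (1+c2)^2) (hcp' : 0 ≤ 1+c2)
    (hcm : (m0-c0)^2+(m1-c1)^2 ≤ (1-c2)^2) (hcm' : 0 ≤ 1-c2)
    (hdp : (m0+d0)^2+(m1+d1)^2 ≤ (1+d2)^2) (hdp' : 0 ≤ 1+d2)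
    (hdm : (m0-d0)^2+(m1-d1)^2 ≤ (1-d2)^2) (hdm' : 0 ≤ 1-d2)
    (hbm : b0^2+b1^2 ≤ (1-b2)^2) (hbp : b0^2+b1^2 ≤ (1+b2)^2)
    (hb2a : -1 ≤ b2) (hb2b : b2 ≤ 1)
    (hem : e0^2+e1^2 ≤ (1-e2)^2) (hep : e0^2+e1^2 ≤ (1+e2)^2)
    (he2a : -1 ≤ e2) (he2b : e2 ≤ 1) :
    |b0*(c0+d0) + b1*(c1+d1) + b2*(c2+d2) + (e0*(c0-d0) + e1*(c1-d1) + e2*(c2-d2))| ≤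
      2 * Real.sqrt 2 := by
  obtain ⟨Pp, hPp⟩ : ∃ x, x = Real.sqrt ((c0+d0)^2+(c1+d1)^2) := ⟨_, rfl⟩
  obtain ⟨Pm, hPm⟩ : ∃ x, x = Real.sqrt ((c0-d0)^2+(c1-d1)^2) := ⟨_, rfl⟩
  -- norms of boundary vectors
  have hMCp : Real.sqrt ((m0+c0)^2+(m1+c1)^2) ≤ 1+c2 := sqrt_le_of_sq_le' hcp hcp'
  have hMCm : Real.sqrt ((m0-c0)^2+(m1-c1)^2) ≤ 1-c2 := sqrt_le_of_sq_le' hcm hcm'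
  have hMDp : Real.sqrt ((m0+d0)^2+(m1+d1)^2) ≤ 1+d2 := sqrt_le_of_sq_le' hdp hdp'
  have hMDm : Real.sqrt ((m0-d0)^2+(m1-d1)^2) ≤ 1-d2 := sqrt_le_of_sq_le' hdm hdm'
  -- P+ ≤ 2 - |c2 - d2|
  have t1 : Pp ≤ (1+c2) + (1-d2) := by
    have := tri2 (m0+c0) (m1+c1) (d0-m0) (d1-m1)
    have he : Real.sqrt ((m0+c0+(d0-m0))^2+(m1+c1+(d1-m1))^2) = Pp := by rw [hPp]; congr 1; ring
    have he2 : Real.sqrt ((d0-m0)^2+(d1-m1)^2) = Real.sqrt ((m0-d0)^2+(m1-d1)^2) := by congr 1; ring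
    rw [he, he2] at this
    linarith
  have t2 : Pp ≤ (1+d2) + (1-c2) := by
    have := tri2 (m0+d0) (m1+d1) (c0-m0) (c1-m1)
    have he : Real.sqrt ((m0+d0+(c0-m0))^2+(m1+d1+(c1-m1))^2) = Pp := by rw [hPp]; congr 1; ring
    have he2 : Real.sqrt ((c0-m0)^2+(c1-m1)^2) = Real.sqrt ((m0-c0)^2+(m1-c1)^2) := by congr 1; ring
    rw [he, he2] at this
    linarith
  have hPpS : Pp ≤ 2 - |c2 - d2| := by
    rcases abs_cases (c2 - d2) with ⟨h,_⟩|⟨h,_⟩ <;> rw [h] <;> linarith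
  -- P- ≤ 2 - |c2 + d2|
  have t3 : Pm ≤ (1-c2) + (1-d2) := by
    have := tri2 (c0-m0) (c1-m1) (m0-d0) (m1-d1)
    have he : Real.sqrt ((c0-m0+(m0-d0))^2+(c1-m1+(m1-d1))^2) = Pm := by rw [hPm]; congr 1; ring
    have he2 : Real.sqrt ((c0-m0)^2+(c1-m1)^2) = Real.sqrt ((m0-c0)^2+(m1-c1)^2) := by congr 1; ring
    rw [he, he2] at this
    linarith
  have t4 : Pm ≤ (1+c2) + (1+d2) := by
    have := tri2 (m0+c0) (m1+c1) (-(m0+d0)) (-(m1+d1))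
    have he : Real.sqrt ((m0+c0+(-(m0+d0)))^2+(m1+c1+(-(m1+d1)))^2) = Pm := by rw [hPm]; congr 1; ring
    have he2 : Real.sqrt ((-(m0+d0))^2+(-(m1+d1))^2) = Real.sqrt ((m0+d0)^2+(m1+d1)^2) := by congr 1; ring
    rw [he, he2] at this
    linarith
  have hPmS : Pm ≤ 2 - |c2 + d2| := by
    rcases abs_cases (c2 + d2) with ⟨h,_⟩|⟨h,_⟩ <;> rw [h] <;> linarith
  -- ‖c‖,‖d‖ ≤ 1 and P+ + P- ≤ 2√2
  have hc1 : Real.sqrt (c0^2+c1^2) ≤ 1 := by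
    have := tri2 (m0+c0) (m1+c1) (c0-m0) (c1-m1)
    have he : Real.sqrt ((m0+c0+(c0-m0))^2+(m1+c1+(c1-m1))^2)
        = Real.sqrt ((2*c0)^2+(2*c1)^2) := by ring_nf
    have he2 : Real.sqrt ((c0-m0)^2+(c1-m1)^2) = Real.sqrt ((m0-c0)^2+(m1-c1)^2) := by congr 1; ring
    rw [he, he2] at this
    have h4 : Real.sqrt ((2*c0)^2+(2*c1)^2) = 2 * Real.sqrt (c0^2+c1^2) := by
      rw [show (2*c0)^2+(2*c1)^2 = 4*(c0^2+c1^2) by ring,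
        show (4:ℝ)*(c0^2+c1^2) = 2^2*(c0^2+c1^2) by norm_num,
        Real.sqrt_mul (by positivity), Real.sqrt_sq (by norm_num)]
    rw [h4] at this
    linarith
  have hd1 : Real.sqrt (d0^2+d1^2) ≤ 1 := by
    have := tri2 (m0+d0) (m1+d1) (d0-m0) (d1-m1)
    have he : Real.sqrt ((m0+d0+(d0-m0))^2+(m1+d1+(d1-m1))^2)
        = Real.sqrt ((2*d0)^2+(2*d1)^2) := by ring_nf
    have he2 : Real.sqrt ((d0-m0)^2+(d1-m1)^2) = Real.sqrt ((m0-d0)^2+(m1-d1)^2) := by congr 1; ring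
    rw [he, he2] at this
    have h4 : Real.sqrt ((2*d0)^2+(2*d1)^2) = 2 * Real.sqrt (d0^2+d1^2) := by
      rw [show (2*d0)^2+(2*d1)^2 = 4*(d0^2+d1^2) by ring,
        show (4:ℝ)*(d0^2+d1^2) = 2^2*(d0^2+d1^2) by norm_num,
        Real.sqrt_mul (by positivity), Real.sqrt_sq (by norm_num)]
    rw [h4] at this
    linarith
  have hPsum : Pp + Pm ≤ 2 * Real.sqrt 2 := by
    have hp2 : Pp^2 = (c0+d0)^2+(c1+d1)^2 := by rw [hPp]; exact Real.sq_sqrt (by positivity)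
    have hm2 : Pm^2 = (c0-d0)^2+(c1-d1)^2 := by rw [hPm]; exact Real.sq_sqrt (by positivity)
    have hcc : Real.sqrt (c0^2+c1^2)^2 = c0^2+c1^2 := Real.sq_sqrt (by positivity)
    have hdd : Real.sqrt (d0^2+d1^2)^2 = d0^2+d1^2 := Real.sq_sqrt (by positivity)
    have hC : c0^2+c1^2 ≤ 1 := by
      rw [← hcc]; exact pow_le_one₀ (Real.sqrt_nonneg _) hc1
    have hD : d0^2+d1^2 ≤ 1 := by
      rw [← hdd]; exact pow_le_one₀ (Real.sqrt_nonneg _) hd1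
    have hPp0 : 0 ≤ Pp := by rw [hPp]; exact Real.sqrt_nonneg _
    have hPm0 : 0 ≤ Pm := by rw [hPm]; exact Real.sqrt_nonneg _
    refine two_sq_sum _ _ hPp0 hPm0 ?_
    rw [hp2, hm2]; linarith [hC, hD]
  -- |s_c|,|s_d| ≤ 1 so S+ + S- ≤ 2
  have hS : |c2 + d2| + |c2 - d2| ≤ 2 := by
    rcases abs_cases (c2+d2) with ⟨h,_⟩|⟨h,_⟩ <;> rcases abs_cases (c2-d2) with ⟨h',_⟩|⟨h',_⟩ <;>
      rw [h, h'] <;> linarith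
  have h2s : (2:ℝ) ≤ 2 * Real.sqrt 2 := by linarith [one_le_sqrt2]
  have hb := dual_pair b0 b1 b2 (c0+d0) (c1+d1) (c2+d2) hbm hbp hb2a hb2b
  have he := dual_pair e0 e1 e2 (c0-d0) (c1-d1) (c2-d2) hem hep he2a he2b
  have habs := abs_add_le (b0*(c0+d0) + b1*(c1+d1) + b2*(c2+d2))
    (e0*(c0-d0) + e1*(c1-d1) + e2*(c2-d2))
  rw [← hPp] at hb
  rw [← hPm] at he
  rcases max_cases Pp |c2+d2| with ⟨hx,_⟩|⟨hx,hx'⟩ <;> rcases max_cases Pm |c2-d2| with ⟨hy,_⟩|⟨hy,hy'⟩ <;>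
    rw [hx] at hb <;> rw [hy] at he
  · linarith
  · linarith
  · linarith
  · linarith

lemma dot3_eval (f ω : Fin 3 → ℝ) : dot3 f ω = f 0 * ω 0 + f 1 * ω 1 + f 2 * ω 2 := by
  simp [dot3, Fin.sum_univ_three]

lemma uEff_mem : uEff ∈ EffD := by
  intro ω hω
  rw [dot3_eval]
  simp [uEff, hω.2]

lemma eff_dual {f : Fin 3 → ℝ} (hf : f ∈ EffD) : f ∈ VdualD :=
  ⟨1, zero_le_one, f, hf, (one_smul ℝ f).symm⟩

lemma pos_sq {x : Fin 3 → ℝ} (hx : x ∈ VposD) :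
    x 0 ^ 2 + x 1 ^ 2 ≤ x 2 ^ 2 ∧ 0 ≤ x 2 := by
  obtain ⟨c, hc, ω, hω, rfl⟩ := hx
  obtain ⟨hω1, hω2⟩ := hω
  simp only [Pi.smul_apply, smul_eq_mul]
  rw [hω2]
  constructor
  · nlinarith [mul_le_mul_of_nonneg_left hω1 (sq_nonneg c)]
  · simpa using hc

lemma eff_sq {f : Fin 3 → ℝ} (hf : f ∈ EffD) :
    f 0 ^ 2 + f 1 ^ 2 ≤ f 2 ^ 2 ∧ f 0 ^ 2 + f 1 ^ 2 ≤ (1 - f 2) ^ 2 ∧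
      0 ≤ f 2 ∧ f 2 ≤ 1 := by
  have h2 := hf uEff (by constructor <;> simp [uEff])
  rw [dot3_eval] at h2
  simp [uEff] at h2
  set n := Real.sqrt (f 0 ^ 2 + f 1 ^ 2) with hn
  have hn0 : 0 ≤ n := Real.sqrt_nonneg _
  have hn2 : n ^ 2 = f 0 ^ 2 + f 1 ^ 2 := Real.sq_sqrt (by positivity)
  by_cases h0 : f 0 ^ 2 + f 1 ^ 2 = 0
  · have hf0 : f 0 = 0 := by nlinarith [sq_nonneg (f 0), sq_nonneg (f 1)]
    have hf1 : f 1 = 0 := by nlinarith [sq_nonneg (f 0), sq_nonneg (f 1)]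
    refine ⟨?_, ?_, h2.1, h2.2⟩ <;> rw [hf0, hf1] <;> norm_num <;> positivity
  · have hnpos : 0 < n := by
      rcases lt_or_eq_of_le hn0 with h | h
      · exact h
      · exfalso; apply h0; rw [← hn2, ← h]; ring
    have hmem : ∀ s : ℝ, s^2 = 1 →
        (![s * f 0 / n, s * f 1 / n, 1] : Fin 3 → ℝ) ∈ OmegaD := by
      intro s hs
      refine ⟨?_, rfl⟩
      show (s * f 0 / n)^2 + (s * f 1 / n)^2 ≤ 1
      have heq : (s * f 0 / n)^2 + (s * f 1 / n)^2 = s^2 * (f 0^2 + f 1^2) / n^2 := by ring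
      rw [heq, ← hn2, hs]
      rw [one_mul, div_self (by positivity)]
    have hp := hf _ (hmem 1 (by norm_num))
    have hm := hf _ (hmem (-1) (by norm_num))
    rw [dot3_eval] at hp hm
    simp only [Matrix.cons_val_zero, Matrix.cons_val_one, Matrix.head_cons,
      Matrix.cons_val_two, Matrix.tail_cons, Set.mem_Icc] at hp hm
    have hp1 : f 0 * (1 * f 0 / n) + f 1 * (1 * f 1 / n) = n := by
      field_simp
      linear_combination -hn2
    have hm1 : f 0 * (-1 * f 0 / n) + f 1 * (-1 * f 1 / n) = -n := by
      field_simp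
      linear_combination hn2
    have h1n : n ≤ 1 - f 2 := by
      have := hp.2
      rw [show f 0 * (1 * f 0 / n) + f 1 * (1 * f 1 / n) + f 2 * 1
        = (f 0 * (1 * f 0 / n) + f 1 * (1 * f 1 / n)) + f 2 by ring, hp1] at this
      linarith
    have hfn : n ≤ f 2 := by
      have := hm.1
      rw [show f 0 * (-1 * f 0 / n) + f 1 * (-1 * f 1 / n) + f 2 * 1
        = (f 0 * (-1 * f 0 / n) + f 1 * (-1 * f 1 / n)) + f 2 by ring, hm1] at this
      linarith
    refine ⟨?_, ?_, by linarith, by linarith⟩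
    · rw [← hn2]; nlinarith
    · rw [← hn2]; nlinarith

lemma half_constraints (m X Y : Fin 3 → ℝ)
    (hm : ∀ i, m i = X i + Y i) (hm2 : m 2 = 1)
    (hX : X 0^2+X 1^2 ≤ X 2^2 ∧ 0 ≤ X 2) (hY : Y 0^2+Y 1^2 ≤ Y 2^2 ∧ 0 ≤ Y 2) :
    ((m 0 + (X 0 - Y 0))^2 + (m 1 + (X 1 - Y 1))^2 ≤ (1 + (X 2 - Y 2))^2 ∧
      0 ≤ 1 + (X 2 - Y 2)) ∧
    ((m 0 - (X 0 - Y 0))^2 + (m 1 - (X 1 - Y 1))^2 ≤ (1 - (X 2 - Y 2))^2 ∧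
      0 ≤ 1 - (X 2 - Y 2)) := by
  have e0 := hm 0
  have e1 := hm 1
  have e2 := hm 2
  have hs : X 2 + Y 2 = 1 := by rw [← e2]; exact hm2
  have ep : m 0 + (X 0 - Y 0) = 2 * X 0 := by rw [e0]; ring
  have eq : m 1 + (X 1 - Y 1) = 2 * X 1 := by rw [e1]; ring
  have er : 1 + (X 2 - Y 2) = 2 * X 2 := by linarith
  have ep' : m 0 - (X 0 - Y 0) = 2 * Y 0 := by rw [e0]; ring
  have eq' : m 1 - (X 1 - Y 1) = 2 * Y 1 := by rw [e1]; ring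
  have er' : 1 - (X 2 - Y 2) = 2 * Y 2 := by linarith
  rw [ep, eq, er, ep', eq', er']
  exact ⟨⟨by nlinarith [hX.1], by linarith [hX.2]⟩, ⟨by nlinarith [hY.1], by linarith [hY.2]⟩⟩

lemma obs_diff {B : (Fin 3 → ℝ) × (Fin 3 → ℝ)} (hB : IsObservableD B) :
    (B.1 0 - B.2 0)^2 + (B.1 1 - B.2 1)^2 ≤ (1 - (B.1 2 - B.2 2))^2 ∧
    (B.1 0 - B.2 0)^2 + (B.1 1 - B.2 1)^2 ≤ (1 + (B.1 2 - B.2 2))^2 ∧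
    -1 ≤ B.1 2 - B.2 2 ∧ B.1 2 - B.2 2 ≤ 1 := by
  have hsum := hB.2.2
  have h0 : B.1 0 + B.2 0 = 0 := by
    have := congrFun hsum 0; simpa [uEff] using this
  have h1 : B.1 1 + B.2 1 = 0 := by
    have := congrFun hsum 1; simpa [uEff] using this
  have h2 : B.1 2 + B.2 2 = 1 := by
    have := congrFun hsum 2; simpa [uEff] using this
  obtain ⟨ha, hb, hc, hd⟩ := eff_sq hB.1
  have d0 : B.1 0 - B.2 0 = 2 * B.1 0 := by linarith
  have d1 : B.1 1 - B.2 1 = 2 * B.1 1 := by linarith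
  have d2 : B.1 2 - B.2 2 = 2 * B.1 2 - 1 := by linarith
  rw [d0, d1, d2]
  refine ⟨by nlinarith, by nlinarith, by linarith, by linarith⟩

lemma CHSH_bound (η : (Fin 3 → ℝ) →ₗ[ℝ] (Fin 3 → ℝ)) (hη : IsStateD η)
    (A0 A1 B0 B1 : (Fin 3 → ℝ) × (Fin 3 → ℝ))
    (hA0 : IsObservableD A0) (hA1 : IsObservableD A1)
    (hB0 : IsObservableD B0) (hB1 : IsObservableD B1) :
    |CHSH η A0 A1 B0 B1| ≤ 2 * Real.sqrt 2 := by
  have hm2 : (η uEff) 2 = 1 := by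
    have := hη.2
    rw [dot3_eval] at this
    simpa [uEff] using this
  have hmA0 : ∀ i, (η uEff) i = (η A0.1) i + (η A0.2) i := by
    intro i
    rw [← hA0.2.2, map_add]
    rfl
  have hmA1 : ∀ i, (η uEff) i = (η A1.1) i + (η A1.2) i := by
    intro i
    rw [← hA1.2.2, map_add]
    rfl
  have hX0 := pos_sq (hη.1 _ (eff_dual hA0.1))
  have hX0' := pos_sq (hη.1 _ (eff_dual hA0.2.1))
  have hX1 := pos_sq (hη.1 _ (eff_dual hA1.1))
  have hX1' := pos_sq (hη.1 _ (eff_dual hA1.2.1))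
  obtain ⟨⟨hcp, hcp'⟩, ⟨hcm, hcm'⟩⟩ := half_constraints _ _ _ hmA0 hm2 hX0 hX0'
  obtain ⟨⟨hdp, hdp'⟩, ⟨hdm, hdm'⟩⟩ := half_constraints _ _ _ hmA1 hm2 hX1 hX1'
  obtain ⟨hbm, hbp, hb2a, hb2b⟩ := obs_diff hB0
  obtain ⟨hem, hep, he2a, he2b⟩ := obs_diff hB1
  have key := core ((η uEff) 0) ((η uEff) 1)
    ((η A0.1) 0 - (η A0.2) 0) ((η A0.1) 1 - (η A0.2) 1) ((η A0.1) 2 - (η A0.2) 2)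
    ((η A1.1) 0 - (η A1.2) 0) ((η A1.1) 1 - (η A1.2) 1) ((η A1.1) 2 - (η A1.2) 2)
    (B0.1 0 - B0.2 0) (B0.1 1 - B0.2 1) (B0.1 2 - B0.2 2)
    (B1.1 0 - B1.2 0) (B1.1 1 - B1.2 1) (B1.1 2 - B1.2 2)
    hcp hcp' hcm hcm' hdp hdp' hdm hdm' hbm hbp hb2a hb2b hem hep he2a he2b
  have hEq : CHSH η A0 A1 B0 B1 =
      (B0.1 0 - B0.2 0)*((η A0.1) 0 - (η A0.2) 0 + ((η A1.1) 0 - (η A1.2) 0)) +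
      (B0.1 1 - B0.2 1)*((η A0.1) 1 - (η A0.2) 1 + ((η A1.1) 1 - (η A1.2) 1)) +
      (B0.1 2 - B0.2 2)*((η A0.1) 2 - (η A0.2) 2 + ((η A1.1) 2 - (η A1.2) 2)) +
      ((B1.1 0 - B1.2 0)*((η A0.1) 0 - (η A0.2) 0 - ((η A1.1) 0 - (η A1.2) 0)) +
       (B1.1 1 - B1.2 1)*((η A0.1) 1 - (η A0.2) 1 - ((η A1.1) 1 - (η A1.2) 1)) +
       (B1.1 2 - B1.2 2)*((η A0.1) 2 - (η A0.2) 2 - ((η A1.1) 2 - (η A1.2) 2))) := by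
    simp only [CHSH, corr, dot3_eval]
    ring
  rw [hEq]
  exact key

lemma extreme_disc {a b ω : Fin 3 → ℝ} (ha : a ∈ OmegaD) (hb : b ∈ OmegaD)
    (hω : ω 0 ^ 2 + ω 1 ^ 2 = 1) (hmid : ∀ i, a i + b i = 2 * ω i) : a = b := by
  have e0 := hmid 0
  have e1 := hmid 1
  have key : (a 0 + b 0)^2 + (a 1 + b 1)^2 = 4 := by
    rw [e0, e1]; linear_combination 4*hω
  have h00 : (a 0 - b 0)^2 + (a 1 - b 1)^2 ≤ 0 := by
    nlinarith [ha.1, hb.1, key]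
  have ha0 : a 0 = b 0 := by nlinarith [sq_nonneg (a 0 - b 0), sq_nonneg (a 1 - b 1)]
  have ha1 : a 1 = b 1 := by nlinarith [sq_nonneg (a 0 - b 0), sq_nonneg (a 1 - b 1)]
  funext i
  fin_cases i
  · exact ha0
  · exact ha1
  · show a 2 = b 2
    rw [ha.2, hb.2]

lemma mem_of_GL {T : (Fin 3 → ℝ) →ₗ[ℝ] (Fin 3 → ℝ)} (hT : T ∈ GLOmegaD)
    {ω : Fin 3 → ℝ} (hω : ω ∈ OmegaD) : T ω ∈ OmegaD := by
  rw [← hT.2]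
  exact ⟨ω, hω, rfl⟩

lemma bdry {T : (Fin 3 → ℝ) →ₗ[ℝ] (Fin 3 → ℝ)} (hT : T ∈ GLOmegaD)
    {ω : Fin 3 → ℝ} (hω : ω ∈ OmegaD) (hb : ω 0 ^ 2 + ω 1 ^ 2 = 1) :
    (T ω) 0 ^ 2 + (T ω) 1 ^ 2 = 1 := by
  have hp : T ω ∈ OmegaD := mem_of_GL hT hω
  set p := T ω with hpdef
  set n := Real.sqrt (p 0 ^ 2 + p 1 ^ 2) with hn
  have hn0 : 0 ≤ n := Real.sqrt_nonneg _
  have hn2 : n ^ 2 = p 0 ^ 2 + p 1 ^ 2 := Real.sq_sqrt (by positivity)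
  have hn1 : n ≤ 1 := by
    have : n ^ 2 ≤ 1 := by rw [hn2]; exact hp.1
    nlinarith
  have hp0n : p 0 ≤ n := by nlinarith [sq_nonneg (p 1)]
  have hp0n' : -n ≤ p 0 := by nlinarith [sq_nonneg (p 1)]
  -- the two perturbed points
  have hqp : (![p 0 + (1-n), p 1, 1] : Fin 3 → ℝ) ∈ OmegaD := by
    refine ⟨?_, rfl⟩
    show (p 0 + (1-n))^2 + (p 1)^2 ≤ 1
    nlinarith
  have hqm : (![p 0 - (1-n), p 1, 1] : Fin 3 → ℝ) ∈ OmegaD := by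
    refine ⟨?_, rfl⟩
    show (p 0 - (1-n))^2 + (p 1)^2 ≤ 1
    nlinarith
  obtain ⟨a, haΩ, haT⟩ : ∃ a ∈ OmegaD, T a = ![p 0 + (1-n), p 1, 1] := by
    have := hT.2.symm ▸ hqp
    obtain ⟨a, ha, h⟩ := this
    exact ⟨a, ha, h⟩
  obtain ⟨b, hbΩ, hbT⟩ : ∃ b ∈ OmegaD, T b = ![p 0 - (1-n), p 1, 1] := by
    have := hT.2.symm ▸ hqm
    obtain ⟨b, hb, h⟩ := this
    exact ⟨b, hb, h⟩
  have hsum : T (a + b) = T ((2:ℝ) • ω) := by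
    rw [map_add, map_smul, haT, hbT, ← hpdef]
    funext i
    fin_cases i
    · show p 0 + (1-n) + (p 0 - (1-n)) = ((2:ℝ) • p) 0
      simp; ring
    · show p 1 + p 1 = ((2:ℝ) • p) 1
      simp; ring
    · show (1:ℝ) + 1 = ((2:ℝ) • p) 2
      simp [hp.2]
      norm_num
  have hab : a + b = (2:ℝ) • ω := hT.1.1 hsum
  have hmid : ∀ i, a i + b i = 2 * ω i := by
    intro i
    have := congrFun hab i
    simpa using this
  have hae : a = b := extreme_disc haΩ hbΩ hb hmid
  have : p 0 + (1-n) = p 0 - (1-n) := by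
    have := congrFun (haT.symm.trans (by rw [hae, hbT])) 0
    simpa using this
  have hn1' : n = 1 := by linarith
  rw [← hn2, hn1']
  norm_num

lemma GL_facts {T : (Fin 3 → ℝ) →ₗ[ℝ] (Fin 3 → ℝ)} (hT : T ∈ GLOmegaD) :
    (T ![1,0,0]) 2 = 0 ∧ (T ![0,1,0]) 2 = 0 ∧
    (T ![1,0,0]) 0 ^ 2 + (T ![1,0,0]) 1 ^ 2 = 1 ∧
    (T ![0,1,0]) 0 ^ 2 + (T ![0,1,0]) 1 ^ 2 = 1 ∧
    (T ![1,0,0]) 0 * (T ![0,1,0]) 0 + (T ![1,0,0]) 1 * (T ![0,1,0]) 1 = 0 := by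
  set s : ℝ := Real.sqrt 2 / 2 with hs
  have hs2 : s ^ 2 = 1 / 2 := by
    rw [hs, div_pow, Real.sq_sqrt (by norm_num : (0:ℝ) ≤ 2)]
    norm_num
  have hs0 : 0 < s := by
    rw [hs]
    positivity
  -- boundary states
  have hu : uEff ∈ OmegaD := by constructor <;> simp [uEff]
  have hw1p : (![1,0,1] : Fin 3 → ℝ) ∈ OmegaD := by constructor <;> norm_num <;> rfl
  have hw1m : (![-1,0,1] : Fin 3 → ℝ) ∈ OmegaD := by constructor <;> norm_num <;> rfl
  have hw2p : (![0,1,1] : Fin 3 → ℝ) ∈ OmegaD := by constructor <;> norm_num <;> rfl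
  have hw2m : (![0,-1,1] : Fin 3 → ℝ) ∈ OmegaD := by constructor <;> norm_num <;> rfl
  have hwdp : (![s,s,1] : Fin 3 → ℝ) ∈ OmegaD := by
    constructor
    · show s^2 + s^2 ≤ 1
      rw [hs2]; norm_num
    · rfl
  have hwdm : (![-s,-s,1] : Fin 3 → ℝ) ∈ OmegaD := by
    constructor
    · show (-s)^2 + (-s)^2 ≤ 1
      rw [neg_pow, hs2]; norm_num
    · rfl
  -- vector identities
  have e1p : (![1,0,1] : Fin 3 → ℝ) = uEff + ![1,0,0] := by
    funext i; fin_cases i <;> simp [uEff]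
  have e1m : (![-1,0,1] : Fin 3 → ℝ) = uEff - ![1,0,0] := by
    funext i; fin_cases i <;> simp [uEff]
  have e2p : (![0,1,1] : Fin 3 → ℝ) = uEff + ![0,1,0] := by
    funext i; fin_cases i <;> simp [uEff]
  have e2m : (![0,-1,1] : Fin 3 → ℝ) = uEff - ![0,1,0] := by
    funext i; fin_cases i <;> simp [uEff]
  have edp : (![s,s,1] : Fin 3 → ℝ) = uEff + s • ![1,0,0] + s • ![0,1,0] := by
    funext i; fin_cases i <;> simp [uEff]
  have edm : (![-s,-s,1] : Fin 3 → ℝ) = uEff - s • ![1,0,0] - s • ![0,1,0] := by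
    funext i; fin_cases i <;> simp [uEff]
  -- notation
  set k := T uEff with hk
  set c := T ![1,0,0] with hc
  set d := T ![0,1,0] with hd
  have hkΩ : k ∈ OmegaD := mem_of_GL hT hu
  -- third coordinates
  have hc2 : c 2 = 0 := by
    have h := (mem_of_GL hT hw1p).2
    rw [e1p, map_add] at h
    have : k 2 + c 2 = 1 := h
    have := hkΩ.2
    linarith
  have hd2 : d 2 = 0 := by
    have h := (mem_of_GL hT hw2p).2
    rw [e2p, map_add] at h
    have : k 2 + d 2 = 1 := h
    have := hkΩ.2
    linarith
  -- boundary equations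
  have F1 : (k 0 + c 0)^2 + (k 1 + c 1)^2 = 1 := by
    have h := bdry hT hw1p (by norm_num)
    rw [e1p, map_add] at h
    exact h
  have F2 : (k 0 - c 0)^2 + (k 1 - c 1)^2 = 1 := by
    have h := bdry hT hw1m (by norm_num)
    rw [e1m, map_sub] at h
    exact h
  have F3 : (k 0 + d 0)^2 + (k 1 + d 1)^2 = 1 := by
    have h := bdry hT hw2p (by norm_num)
    rw [e2p, map_add] at h
    exact h
  have F4 : (k 0 - d 0)^2 + (k 1 - d 1)^2 = 1 := by
    have h := bdry hT hw2m (by norm_num)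
    rw [e2m, map_sub] at h
    exact h
  have F5 : (k 0 + s * c 0 + s * d 0)^2 + (k 1 + s * c 1 + s * d 1)^2 = 1 := by
    have h := bdry hT hwdp (by show s^2 + s^2 = 1; rw [hs2]; norm_num)
    rw [edp, map_add, map_add, map_smul, map_smul] at h
    exact h
  have F6 : (k 0 - s * c 0 - s * d 0)^2 + (k 1 - s * c 1 - s * d 1)^2 = 1 := by
    have h := bdry hT hwdm (by show (-s)^2 + (-s)^2 = 1; rw [neg_pow, hs2]; norm_num)
    rw [edm, map_sub, map_sub, map_smul, map_smul] at h
    exact h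
  -- algebra
  have hkc : k 0 * c 0 + k 1 * c 1 = 0 := by linear_combination (1/4)*F1 - (1/4)*F2
  have hkd : k 0 * d 0 + k 1 * d 1 = 0 := by linear_combination (1/4)*F3 - (1/4)*F4
  have hKC : (k 0^2 + k 1^2) + (c 0^2 + c 1^2) = 1 := by
    linear_combination (1/2)*F1 + (1/2)*F2
  have hKD : (k 0^2 + k 1^2) + (d 0^2 + d 1^2) = 1 := by
    linear_combination (1/2)*F3 + (1/2)*F4
  have hcd : c 0 * d 0 + c 1 * d 1 = 0 := by
    linear_combination (1/2)*F5 + (1/2)*F6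
      - (c 0^2 + c 1^2 + d 0^2 + d 1^2 + 2*(c 0*d 0 + c 1*d 1))*hs2
      - (1/2)*hKC - (1/2)*hKD
  -- c ≠ 0
  have hcne : c 0^2 + c 1^2 ≠ 0 := by
    intro h
    obtain ⟨h0, h1⟩ := (add_eq_zero_iff_of_nonneg (sq_nonneg (c 0)) (sq_nonneg (c 1))).mp h
    have hc0 : c 0 = 0 := pow_eq_zero_iff (by norm_num) |>.mp h0
    have hc1' : c 1 = 0 := pow_eq_zero_iff (by norm_num) |>.mp h1
    have hzero : c = 0 := by
      funext i; fin_cases i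
      · exact hc0
      · exact hc1'
      · exact hc2
    have h10 : (![1,0,0] : Fin 3 → ℝ) = 0 := by
      apply hT.1.1
      rw [map_zero, ← hc, hzero]
    have := congrFun h10 0
    norm_num at this
  have hCpos : 0 < c 0^2 + c 1^2 :=
    lt_of_le_of_ne (by positivity) (Ne.symm hcne)
  have hDpos : 0 < d 0^2 + d 1^2 := by linarith
  have hdet2 : (c 0*d 1 - c 1*d 0)^2 = (c 0^2 + c 1^2) * (d 0^2 + d 1^2) := by
    linear_combination (-(c 0*d 0 + c 1*d 1))*hcd
  have hdet_ne : c 0*d 1 - c 1*d 0 ≠ 0 := by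
    intro h
    rw [h] at hdet2
    have hm := mul_pos hCpos hDpos
    rw [← hdet2] at hm
    norm_num at hm
  have hk0 : k 0 = 0 := by
    have h : k 0 * (c 0*d 1 - c 1*d 0) = 0 := by
      linear_combination (d 1)*hkc - (c 1)*hkd
    exact (mul_eq_zero.mp h).resolve_right hdet_ne
  have hk1 : k 1 = 0 := by
    have h : k 1 * (c 0*d 1 - c 1*d 0) = 0 := by
      linear_combination (-(d 0))*hkc + (c 0)*hkd
    exact (mul_eq_zero.mp h).resolve_right hdet_ne
  have hC1 : c 0^2 + c 1^2 = 1 := by rw [hk0, hk1] at hKC; linarith [hKC]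
  have hD1 : d 0^2 + d 1^2 = 1 := by rw [hk0, hk1] at hKD; linarith [hKD]
  exact ⟨hc2, hd2, hC1, hD1, hcd⟩

lemma angle_exists {x y : ℝ} (h : x^2 + y^2 = 1) :
    ∃ θ ∈ Set.Ico 0 (2 * Real.pi), Real.cos θ = x ∧ Real.sin θ = y := by
  have hx1 : -1 ≤ x := by nlinarith [sq_nonneg y]
  have hx2 : x ≤ 1 := by nlinarith [sq_nonneg y]
  have hy2 : y^2 = 1 - x^2 := by linarith
  have hpi := Real.pi_pos
  rcases le_or_gt 0 y with hy | hy
  · refine ⟨Real.arccos x, ⟨Real.arccos_nonneg x, ?_⟩, Real.cos_arccos hx1 hx2, ?_⟩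
    · have := Real.arccos_le_pi x
      linarith
    · rw [Real.sin_arccos]
      rw [← hy2, Real.sqrt_sq hy]
  · refine ⟨2 * Real.pi - Real.arccos x, ⟨?_, ?_⟩, ?_, ?_⟩
    · have := Real.arccos_le_pi x
      linarith
    · have harc : 0 < Real.arccos x := by
        rcases lt_or_eq_of_le (Real.arccos_nonneg x) with h' | h'
        · exact h'
        · exfalso
          have hx : x = 1 := by
            have := Real.cos_arccos hx1 hx2
            rw [← h', Real.cos_zero] at this
            linarith
          rw [hx] at h
          nlinarith
      linarith
    · rw [Real.cos_sub, Real.cos_two_pi, Real.sin_two_pi]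
      simp [Real.cos_arccos hx1 hx2]
    · rw [Real.sin_sub, Real.cos_two_pi, Real.sin_two_pi]
      rw [Real.sin_arccos, ← hy2]
      have : Real.sqrt (y^2) = -y := by
        rw [show y^2 = (-y)^2 by ring, Real.sqrt_sq (by linarith)]
      rw [this]
      ring


def vv (t : ℝ) : Fin 3 → ℝ := ![Real.cos t, Real.sin t, 0]

lemma vv_eq (t : ℝ) : vv t = (2:ℝ) • eD t - uEff := by
  funext i; fin_cases i <;> simp [vv, eD, uEff] <;> ring

lemma corr_EObs (η : (Fin 3 → ℝ) →ₗ[ℝ] (Fin 3 → ℝ)) (s t : ℝ) :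
    corr η (EObsD s) (EObsD t) = dot3 (vv t) (η (vv s)) := by
  have hvs : η (vv s) = (2:ℝ) • η (eD s) - η uEff := by
    rw [vv_eq, map_sub, map_smul]
  rw [hvs]
  simp only [corr, EObsD, map_sub, dot3_eval, vv, Pi.sub_apply, Pi.smul_apply,
    smul_eq_mul, Matrix.cons_val_zero, Matrix.cons_val_one, Matrix.head_cons]
  have h0 : eD t 0 = Real.cos t / 2 := rfl
  have h1 : eD t 1 = Real.sin t / 2 := rfl
  have h2 : eD t 2 = 1 / 2 := rfl
  have hu0 : uEff 0 = 0 := rfl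
  have hu1 : uEff 1 = 0 := rfl
  have hu2 : uEff 2 = 1 := rfl
  rw [h0, h1, h2, hu0, hu1, hu2]
  have h3 : (![Real.cos t, Real.sin t, 0] : Fin 3 → ℝ) 2 = 0 := rfl
  rw [h3]
  ring

/-- every maximally entangled state of the disc theory optimizes the CHSH
value for suitable angles `α⋆, β⋆, γ⋆, δ⋆ ∈ [0, 2π)`. -/
theorem maxEnt_optimal_CHSH_disc
    (ηstar : (Fin 3 → ℝ) →ₗ[ℝ] (Fin 3 → ℝ)) (hstar : ηstar ∈ GLOmegaD) :
    ∃ α β γ δ : ℝ, α ∈ Set.Ico 0 (2 * Real.pi) ∧ β ∈ Set.Ico 0 (2 * Real.pi) ∧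
      γ ∈ Set.Ico 0 (2 * Real.pi) ∧ δ ∈ Set.Ico 0 (2 * Real.pi) ∧
      ∀ η : (Fin 3 → ℝ) →ₗ[ℝ] (Fin 3 → ℝ), IsStateD η →
        ∀ A0 A1 B0 B1 : (Fin 3 → ℝ) × (Fin 3 → ℝ),
          IsObservableD A0 → IsObservableD A1 → IsObservableD B0 → IsObservableD B1 →
          |CHSH η A0 A1 B0 B1| ≤ |CHSH ηstar (EObsD α) (EObsD β) (EObsD γ) (EObsD δ)| := by
  obtain ⟨hc2, hd2, hC1, hD1, hcd⟩ := GL_facts hstar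
  have hs2 : Real.sqrt 2 ^ 2 = 2 := Real.sq_sqrt (by norm_num)
  have hs0 : (0:ℝ) < Real.sqrt 2 := Real.sqrt_pos.mpr (by norm_num)
  have hpi := Real.pi_pos
  have hxγ : ((ηstar ![1,0,0]) 0 + (ηstar ![0,1,0]) 0)^2 / Real.sqrt 2 ^ 2 +
      ((ηstar ![1,0,0]) 1 + (ηstar ![0,1,0]) 1)^2 / Real.sqrt 2 ^ 2 = 1 := by
    rw [hs2]
    linear_combination hC1/2 + hD1/2 + hcd
  have hxδ : ((ηstar ![1,0,0]) 0 - (ηstar ![0,1,0]) 0)^2 / Real.sqrt 2 ^ 2 +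
      ((ηstar ![1,0,0]) 1 - (ηstar ![0,1,0]) 1)^2 / Real.sqrt 2 ^ 2 = 1 := by
    rw [hs2]
    linear_combination hC1/2 + hD1/2 - hcd
  rw [show ∀ a b : ℝ, a^2 / Real.sqrt 2 ^2 + b^2 / Real.sqrt 2^2
    = (a / Real.sqrt 2)^2 + (b / Real.sqrt 2)^2 from fun a b => by ring] at hxγ hxδ
  obtain ⟨γ, hγI, hγc, hγs⟩ := angle_exists hxγ
  obtain ⟨δ, hδI, hδc, hδs⟩ := angle_exists hxδ
  refine ⟨0, Real.pi/2, γ, δ, ⟨le_refl 0, by linarith⟩, ⟨by linarith, by linarith⟩,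
    hγI, hδI, ?_⟩
  intro η hη A0 A1 B0 B1 hA0 hA1 hB0 hB1
  have h0 : vv 0 = ![1,0,0] := by
    funext i; fin_cases i <;> simp [vv]
  have hpi2 : vv (Real.pi/2) = ![0,1,0] := by
    funext i; fin_cases i <;> simp [vv]
  have hval : CHSH ηstar (EObsD 0) (EObsD (Real.pi/2)) (EObsD γ) (EObsD δ)
      = 2 * Real.sqrt 2 := by
    rw [CHSH, corr_EObs, corr_EObs, corr_EObs, corr_EObs, h0, hpi2,
      dot3_eval, dot3_eval, dot3_eval, dot3_eval]
    have g0 : vv γ 0 = ((ηstar ![1,0,0]) 0 + (ηstar ![0,1,0]) 0) / Real.sqrt 2 := hγc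
    have g1 : vv γ 1 = ((ηstar ![1,0,0]) 1 + (ηstar ![0,1,0]) 1) / Real.sqrt 2 := hγs
    have g2 : vv γ 2 = 0 := rfl
    have f0 : vv δ 0 = ((ηstar ![1,0,0]) 0 - (ηstar ![0,1,0]) 0) / Real.sqrt 2 := hδc
    have f1 : vv δ 1 = ((ηstar ![1,0,0]) 1 - (ηstar ![0,1,0]) 1) / Real.sqrt 2 := hδs
    have f2 : vv δ 2 = 0 := rfl
    rw [g0, g1, g2, f0, f1, f2]
    field_simp
    linear_combination 2 * hC1 + 2 * hD1 - 2 * hs2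
  calc |CHSH η A0 A1 B0 B1| ≤ 2 * Real.sqrt 2 :=
        CHSH_bound η hη A0 A1 B0 B1 hA0 hA1 hB0 hB1
    _ = |CHSH ηstar (EObsD 0) (EObsD (Real.pi/2)) (EObsD γ) (EObsD δ)| := by
        rw [hval, abs_of_nonneg (by positivity)]
end
end

section
/- An element μ ∈ V_A ⊗ V_B belongs to Ω_A ⊗_max Ω_B if and only if the induced linear map μ̂ : V_A → V_B satisfies ⟨u_B, μ̂(u_A)⟩ = 1 and μ̂(V*_{A+}) ⊆ V_{B+}; moreover μ ↦ μ̂ is a bijection between Ω_A ⊗_max Ω_B and the set of linear maps T : V_A → V_B with ⟨u_B, T(u_A)⟩ = 1 and T(V*_{A+}) ⊆ V_{B+}. -/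
noncomputable section

/-- Standard inner product on `ℝ^m`. -/
def dotm {m : ℕ} (v w : Fin m → ℝ) : ℝ := ∑ i, v i * w i

/-- The effect space of a state space `Ω`. -/
def Eff {m : ℕ} (Ω : Set (Fin m → ℝ)) : Set (Fin m → ℝ) :=
  {e | ∀ ω ∈ Ω, dotm e ω ∈ Set.Icc (0 : ℝ) 1}

/-- The cone generated by a set of vectors. -/
def cone {m : ℕ} (S : Set (Fin m → ℝ)) : Set (Fin m → ℝ) :=
  {x | ∃ c : ℝ, 0 ≤ c ∧ ∃ s ∈ S, x = c • s}

/-- The pairing `⟨e ⊗ f, μ⟩_{AB}` where an element `μ ∈ V_A ⊗ V_B` is identified with a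
matrix via the canonical isomorphism `ℝ^m ⊗ ℝ^{m'} ≅ Matrix (Fin m) (Fin m') ℝ`
(which carries the induced inner product to the standard one). -/
def pairT {m m' : ℕ} (μ : Matrix (Fin m) (Fin m') ℝ) (e : Fin m → ℝ) (f : Fin m' → ℝ) : ℝ :=
  ∑ i, ∑ j, e i * f j * μ i j

/-- The maximal tensor product `Ω_A ⊗_max Ω_B`. -/
def maxTensor {m m' : ℕ} (ΩA : Set (Fin m → ℝ)) (ΩB : Set (Fin m' → ℝ))
    (uA : Fin m → ℝ) (uB : Fin m' → ℝ) : Set (Matrix (Fin m) (Fin m') ℝ) :=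
  {μ | pairT μ uA uB = 1 ∧ ∀ e ∈ Eff ΩA, ∀ f ∈ Eff ΩB, 0 ≤ pairT μ e f}

/-- The induced linear map `μ̂ : V_A → V_B`, determined by `⟨f, μ̂(e)⟩ = ⟨e ⊗ f, μ⟩_{AB}`. -/
def hatMap {m m' : ℕ} (μ : Matrix (Fin m) (Fin m') ℝ) : (Fin m → ℝ) →ₗ[ℝ] (Fin m' → ℝ) :=
  μ.transpose.mulVecLin

lemma dotm_smul_left {m : ℕ} (c : ℝ) (v w : Fin m → ℝ) : dotm (c • v) w = c * dotm v w := by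
  simp [dotm, Finset.mul_sum, mul_assoc]

lemma dotm_smul_right {m : ℕ} (c : ℝ) (v w : Fin m → ℝ) : dotm v (c • w) = c * dotm v w := by
  simp [dotm, Finset.mul_sum, mul_left_comm]

lemma dotm_add_left {m : ℕ} (v v' w : Fin m → ℝ) : dotm (v + v') w = dotm v w + dotm v' w := by
  simp [dotm, add_mul, Finset.sum_add_distrib]

lemma dotm_sub_left {m : ℕ} (v v' w : Fin m → ℝ) : dotm (v - v') w = dotm v w - dotm v' w := by
  simp [dotm, sub_mul, Finset.sum_sub_distrib]

lemma dotm_neg_left {m : ℕ} (v w : Fin m → ℝ) : dotm (-v) w = -dotm v w := by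
  simp [dotm]

lemma pi_repr {m : ℕ} (x : Fin m → ℝ) : x = ∑ i, x i • (Pi.single i (1:ℝ) : Fin m → ℝ) := by
  funext k
  simp [Pi.single_apply, Finset.sum_apply]

lemma pairT_eq {m m' : ℕ} (μ : Matrix (Fin m) (Fin m') ℝ) (e : Fin m → ℝ) (f : Fin m' → ℝ) :
    pairT μ e f = dotm f (hatMap μ e) := by
  simp only [pairT, dotm, hatMap, Matrix.mulVecLin_apply, Matrix.mulVec, dotProduct,
    Matrix.transpose_apply, Finset.mul_sum]
  rw [Finset.sum_comm]
  exact Finset.sum_congr rfl fun j _ => Finset.sum_congr rfl fun i _ => by ring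

lemma hatMap_single {m m' : ℕ} (μ : Matrix (Fin m) (Fin m') ℝ) (i : Fin m) (j : Fin m') :
    hatMap μ (Pi.single i 1) j = μ i j := by
  simp [hatMap, Matrix.mulVecLin_apply, Matrix.mulVec, dotProduct, Pi.single_apply,
    mul_ite, Finset.sum_ite_eq']

lemma dotm_cont {m : ℕ} (g : Fin m → ℝ) : Continuous fun x : Fin m → ℝ => dotm g x := by
  unfold dotm
  exact continuous_finset_sum _ fun i _ => continuous_const.mul (continuous_apply i)

lemma cone_smul {m : ℕ} {S : Set (Fin m → ℝ)} {y : Fin m → ℝ} {c : ℝ} (hc : 0 ≤ c)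
    (hy : y ∈ cone S) : c • y ∈ cone S := by
  obtain ⟨c', hc', s, hs, rfl⟩ := hy
  exact ⟨c * c', mul_nonneg hc hc', s, hs, smul_smul c c' s⟩

lemma mem_cone_iff {m' : ℕ} {ΩB : Set (Fin m' → ℝ)} (hBcomp : IsCompact ΩB)
    (hBconv : Convex ℝ ΩB) (hBne : ΩB.Nonempty)
    {uB : Fin m' → ℝ} (huB : ∀ ξ ∈ ΩB, dotm uB ξ = 1)
    (w : Fin m' → ℝ) :
    w ∈ cone ΩB ↔ ∀ f ∈ Eff ΩB, 0 ≤ dotm f w := by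
  constructor
  · rintro ⟨c, hc, ξ, hξ, rfl⟩ f hf
    rw [dotm_smul_right]
    exact mul_nonneg hc (hf ξ hξ).1
  · intro h
    have huBEff : uB ∈ Eff ΩB := fun ξ hξ => by
      rw [huB ξ hξ]; exact ⟨zero_le_one, le_refl 1⟩
    have hc0 : 0 ≤ dotm uB w := h uB huBEff
    rcases eq_or_lt_of_le hc0 with hc | hc
    · -- dotm uB w = 0 : show w = 0
      have hg : ∀ g : Fin m' → ℝ, 0 ≤ dotm g w := by
        intro g
        obtain ⟨ξM, hξM, hM⟩ := hBcomp.exists_isMaxOn hBne ((dotm_cont g).abs).continuousOn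
        set M := |dotm g ξM| with hMdef
        have hM0 : 0 ≤ M := abs_nonneg _
        set ε := (M + 1)⁻¹ with hεdef
        have hε : 0 < ε := by positivity
        set D := 1 + ε * M with hDdef
        have hD : 0 < D := by positivity
        have hfE : D⁻¹ • (uB + ε • g) ∈ Eff ΩB := by
          intro ξ hξ
          have hb : |dotm g ξ| ≤ M := hM hξ
          obtain ⟨hb1, hb2⟩ := abs_le.mp hb
          have e1 : dotm (D⁻¹ • (uB + ε • g)) ξ = D⁻¹ * (1 + ε * dotm g ξ) := by
            rw [dotm_smul_left, dotm_add_left, dotm_smul_left, huB ξ hξ]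
          have hεM : ε * (M + 1) = 1 := inv_mul_cancel₀ (by positivity)
          rw [e1]
          constructor
          · apply mul_nonneg (inv_pos.mpr hD).le
            nlinarith [mul_le_mul_of_nonneg_left hb1 hε.le]
          · have hub : 1 + ε * dotm g ξ ≤ D := by
              nlinarith [mul_le_mul_of_nonneg_left hb2 hε.le]
            calc D⁻¹ * (1 + ε * dotm g ξ) ≤ D⁻¹ * D :=
                  mul_le_mul_of_nonneg_left hub (inv_pos.mpr hD).le
              _ = 1 := inv_mul_cancel₀ (ne_of_gt hD)
        have h0 := h _ hfE
        have e2 : dotm (D⁻¹ • (uB + ε • g)) w = D⁻¹ * (dotm uB w + ε * dotm g w) := by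
          rw [dotm_smul_left, dotm_add_left, dotm_smul_left]
        rw [e2, ← hc, zero_add] at h0
        have hDi : 0 < D⁻¹ := inv_pos.mpr hD
        nlinarith [mul_pos hDi hε]
      have hw0 : w = 0 := by
        have h1 : dotm w w ≤ 0 := by
          have := hg (-w); rw [dotm_neg_left] at this; linarith
        have h2 : dotm w w = 0 := le_antisymm h1 (hg w)
        funext i
        have := (Finset.sum_eq_zero_iff_of_nonneg
          (fun i _ => mul_self_nonneg (w i))).mp h2 i (Finset.mem_univ i)
        simpa [mul_self_eq_zero] using this
      obtain ⟨ξ₀, hξ₀⟩ := hBne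
      exact ⟨0, le_refl 0, ξ₀, hξ₀, by rw [hw0, zero_smul]⟩
    · -- dotm uB w > 0
      set c := dotm uB w with hcdef
      set v := c⁻¹ • w with hvdef
      have hcne : c ≠ 0 := ne_of_gt hc
      have hwv : w = c • v := by
        rw [hvdef, smul_smul, mul_inv_cancel₀ hcne, one_smul]
      have huBv : dotm uB v = 1 := by
        rw [hvdef, dotm_smul_right, ← hcdef, inv_mul_cancel₀ hcne]
      by_cases hvΩ : v ∈ ΩB
      · exact ⟨c, hc0, v, hvΩ, hwv⟩
      · exfalso
        obtain ⟨φ, u, hφ1, hφ2⟩ :=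
          geometric_hahn_banach_closed_point hBconv hBcomp.isClosed hvΩ
        set g : Fin m' → ℝ := fun j => φ (Pi.single j 1) with hgdef
        have hφg : ∀ x, φ x = dotm g x := by
          intro x
          conv_lhs => rw [pi_repr x]
          rw [map_sum]
          simp only [map_smul, smul_eq_mul]
          simp [dotm, hgdef, mul_comm]
        set hvec : Fin m' → ℝ := u • uB - g with hhdef
        have hdh : ∀ x, dotm hvec x = u * dotm uB x - φ x := by
          intro x
          rw [hhdef, dotm_sub_left, dotm_smul_left, hφg]
        have hpos : ∀ ξ ∈ ΩB, 0 < dotm hvec ξ := by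
          intro ξ hξ
          rw [hdh, huB ξ hξ]
          have := hφ1 ξ hξ
          linarith
        have hneg : dotm hvec v < 0 := by
          rw [hdh, huBv]
          linarith
        obtain ⟨ξM, hξM, hM⟩ := hBcomp.exists_isMaxOn hBne (dotm_cont hvec).continuousOn
        set M := dotm hvec ξM with hMdef
        have hMpos : 0 < M := hpos ξM hξM
        have hfE : M⁻¹ • hvec ∈ Eff ΩB := by
          intro ξ hξ
          rw [dotm_smul_left]
          constructor
          · exact mul_nonneg (inv_pos.mpr hMpos).le (hpos ξ hξ).le
          · calc M⁻¹ * dotm hvec ξ ≤ M⁻¹ * M :=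
                  mul_le_mul_of_nonneg_left (hM hξ) (inv_pos.mpr hMpos).le
              _ = 1 := inv_mul_cancel₀ (ne_of_gt hMpos)
        have h0 := h _ hfE
        rw [hwv, dotm_smul_left, dotm_smul_right] at h0
        have hMi : 0 < M⁻¹ := inv_pos.mpr hMpos
        nlinarith [mul_pos hMi hc]

/-- `μ ∈ Ω_A ⊗_max Ω_B` iff the induced map `μ̂` is normalized and
cone-preserving, and `μ ↦ μ̂` is a bijection between `Ω_A ⊗_max Ω_B` and the set of
normalized cone-preserving linear maps. -/
theorem maxTensor_iff_conePreserving {m m' : ℕ}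
    (ΩA : Set (Fin m → ℝ)) (ΩB : Set (Fin m' → ℝ))
    (hAcomp : IsCompact ΩA) (hAconv : Convex ℝ ΩA) (hA0 : (0 : Fin m → ℝ) ∉ ΩA)
    (hAspan : Submodule.span ℝ ΩA = ⊤)
    (hBcomp : IsCompact ΩB) (hBconv : Convex ℝ ΩB) (hB0 : (0 : Fin m' → ℝ) ∉ ΩB)
    (hBspan : Submodule.span ℝ ΩB = ⊤)
    (uA : Fin m → ℝ) (huA : ∀ ω ∈ ΩA, dotm uA ω = 1)
    (uB : Fin m' → ℝ) (huB : ∀ ξ ∈ ΩB, dotm uB ξ = 1) :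
    (∀ μ : Matrix (Fin m) (Fin m') ℝ,
      μ ∈ maxTensor ΩA ΩB uA uB ↔
        (dotm uB (hatMap μ uA) = 1 ∧ ∀ x ∈ cone (Eff ΩA), hatMap μ x ∈ cone ΩB)) ∧
    Set.BijOn (fun μ : Matrix (Fin m) (Fin m') ℝ => hatMap μ) (maxTensor ΩA ΩB uA uB)
      {T : (Fin m → ℝ) →ₗ[ℝ] (Fin m' → ℝ) |
        dotm uB (T uA) = 1 ∧ ∀ x ∈ cone (Eff ΩA), T x ∈ cone ΩB} := by
  rcases ΩB.eq_empty_or_nonempty with hBe | hBne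
  · -- degenerate case: ΩB empty, hence the space V_B is trivial and both sides are empty
    have htriv : ∀ v : Fin m' → ℝ, v = 0 := by
      intro v
      have hv : v ∈ Submodule.span ℝ ΩB := hBspan ▸ Submodule.mem_top
      rw [hBe, Submodule.span_empty, Submodule.mem_bot] at hv
      exact hv
    have huB0 : uB = 0 := htriv uB
    have hd : ∀ x : Fin m' → ℝ, dotm uB x = 0 := by
      intro x; simp [dotm, huB0]
    have hmt : ∀ μ : Matrix (Fin m) (Fin m') ℝ, μ ∉ maxTensor ΩA ΩB uA uB := by
      intro μ hμ
      have h1 := hμ.1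
      rw [pairT_eq, hd] at h1
      exact one_ne_zero h1.symm
    have hse : maxTensor ΩA ΩB uA uB = ∅ := Set.eq_empty_iff_forall_notMem.mpr hmt
    have hte : {T : (Fin m → ℝ) →ₗ[ℝ] (Fin m' → ℝ) |
        dotm uB (T uA) = 1 ∧ ∀ x ∈ cone (Eff ΩA), T x ∈ cone ΩB} = ∅ := by
      ext T
      simp only [Set.mem_setOf_eq, Set.mem_empty_iff_false, iff_false]
      rintro ⟨h1, -⟩
      rw [hd] at h1
      exact one_ne_zero h1.symm
    constructor
    · intro μ
      constructor
      · intro hμ; exact absurd hμ (hmt μ)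
      · rintro ⟨h1, -⟩; rw [hd] at h1; exact absurd h1.symm one_ne_zero
    · rw [hse, hte]; exact Set.bijOn_empty _
  · -- main case
    have key := mem_cone_iff hBcomp hBconv hBne huB
    have part1 : ∀ μ : Matrix (Fin m) (Fin m') ℝ,
        μ ∈ maxTensor ΩA ΩB uA uB ↔
          (dotm uB (hatMap μ uA) = 1 ∧ ∀ x ∈ cone (Eff ΩA), hatMap μ x ∈ cone ΩB) := by
      intro μ
      constructor
      · rintro ⟨h1, h2⟩
        refine ⟨by rw [← pairT_eq]; exact h1, ?_⟩
        rintro x ⟨c, hc, e, he, rfl⟩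
        rw [map_smul]
        refine cone_smul hc ?_
        rw [key]
        intro f hf
        rw [← pairT_eq]
        exact h2 e he f hf
      · rintro ⟨h1, h2⟩
        refine ⟨by rw [pairT_eq]; exact h1, ?_⟩
        intro e he f hf
        have hx : e ∈ cone (Eff ΩA) := ⟨1, zero_le_one, e, he, (one_smul ℝ e).symm⟩
        rw [pairT_eq]
        exact (key _).mp (h2 e hx) f hf
    refine ⟨part1, fun μ hμ => (part1 μ).mp hμ, ?_, ?_⟩
    · -- injectivity
      intro μ₁ _ μ₂ _ hEq
      have hEq' : hatMap μ₁ = hatMap μ₂ := hEq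
      ext i j
      have h' : hatMap μ₁ (Pi.single i 1) = hatMap μ₂ (Pi.single i 1) := by rw [hEq']
      have h'' := congrFun h' j
      rwa [hatMap_single, hatMap_single] at h''
    · -- surjectivity
      intro T hT
      have hhat : hatMap ((LinearMap.toMatrix' T).transpose) = T := by
        apply LinearMap.ext
        intro x
        conv_lhs => rw [pi_repr x]
        conv_rhs => rw [pi_repr x]
        rw [map_sum, map_sum]
        refine Finset.sum_congr rfl fun i _ => ?_
        rw [map_smul, map_smul]
        congr 1
        funext j
        rw [hatMap_single, Matrix.transpose_apply, LinearMap.toMatrix'_apply]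
      exact ⟨(LinearMap.toMatrix' T).transpose,
        (part1 _).mpr (by rw [hhat]; exact hT), hhat⟩
end
end
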